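/- Let r and q be positive integers with r dividing 2q, and write 2q = m·r with m odd (so r is even, say r = 2j). Let G = ℤ_j × (ℤ_{2(m+1)} ⋊ ℤ₂), where ℤ₂ acts on ℤ_{2(m+1)} by n ↦ −n, and let H be the copy of ℤ₂ inside the semidirect product factor. Then H has order 2, [Z_G(H) : H] = r, and [G : H] = r + 2q. -/

import Mathlib

/-- The inversion automorphism `n ↦ -n` of `ℤ_k`, written multiplicatively. -/
noncomputable def negAut (k : ℕ) : MulAut (Multiplicative (ZMod k)) :=
  MulEquiv.inv (Multiplicative (ZMod k))

/-- The action of `ℤ₂` on `ℤ_k` by inversion, as a homomorphism into the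
automorphism group. -/
noncomputable def invHom (k : ℕ) :
    Multiplicative (ZMod 2) →* MulAut (Multiplicative (ZMod k)) :=
  AddMonoidHom.toMultiplicativeLeft
    (ZMod.lift 2 ⟨zmultiplesHom _ (Additive.ofMul (negAut k)), by
      have h2 : negAut k * negAut k = 1 := by
        ext x
        exact inv_inv x
      simp [two_zsmul, ← ofMul_mul, h2]⟩)

lemma invHom_one (k : ℕ) (x : Multiplicative (ZMod k)) :
    invHom k (Multiplicative.ofAdd (1 : ZMod 2)) x = x⁻¹ := by
  have h1 : (Multiplicative.ofAdd (1 : ZMod 2)) = Multiplicative.ofAdd (((1:ℤ) : ZMod 2)) := by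
    norm_cast
  rw [h1]
  unfold invHom
  rw [AddMonoidHom.coe_toMultiplicativeLeft]
  simp only [Function.comp_apply, toAdd_ofAdd, ZMod.lift_coe]
  simp [negAut]

section Aux

variable (m j : ℕ)

local notation "N" => 2 * (m + 1)
local notation "S" => (Multiplicative (ZMod (2 * (m + 1))) ⋊[invHom (2 * (m + 1))]
          Multiplicative (ZMod 2))
local notation "G" => Multiplicative (ZMod j) × S

noncomputable def gg : Multiplicative (ZMod j) × S :=
  (1, SemidirectProduct.inr (Multiplicative.ofAdd (1 : ZMod 2)))

-- characterize solutions of a + a = 0 in ZMod N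
lemma solutions (ν : ZMod (2 * (m + 1))) (h : ν + ν = 0) :
    ν = 0 ∨ ν = ((m + 1 : ℕ) : ZMod (2 * (m + 1))) := by
  haveI : NeZero (2 * (m + 1)) := ⟨by omega⟩
  have hv : ((ν.val : ℕ) : ZMod (2 * (m + 1))) = ν := ZMod.natCast_rightInverse ν
  have hlt : ν.val < 2 * (m + 1) := ZMod.val_lt ν
  have h2 : ((ν.val + ν.val : ℕ) : ZMod (2 * (m + 1))) = 0 := by push_cast [hv]; rw [h]
  rw [ZMod.natCast_eq_zero_iff] at h2
  obtain ⟨c, hc⟩ := h2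
  have hc2 : c ≤ 1 := by
    by_contra hcc
    push_neg at hcc
    have : 2 * (m + 1) * 2 ≤ 2 * (m + 1) * c := Nat.mul_le_mul_left _ hcc
    omega
  interval_cases c
  · left; rw [← hv]; have : ν.val = 0 := by omega
    rw [this]; simp
  · right; rw [← hv]; have : ν.val = m + 1 := by omega
    rw [this]

lemma Mne : ((m + 1 : ℕ) : ZMod (2 * (m + 1))) ≠ 0 := by
  haveI : NeZero (2 * (m + 1)) := ⟨by omega⟩
  rw [Ne, ZMod.natCast_eq_zero_iff]
  intro hd
  have := Nat.le_of_dvd (by omega) hd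
  omega

lemma Msq : ((m + 1 : ℕ) : ZMod (2 * (m + 1))) + ((m + 1 : ℕ) : ZMod (2 * (m + 1))) = 0 := by
  have : (((m + 1) + (m + 1) : ℕ) : ZMod (2 * (m + 1))) = 0 := by
    have : ((m + 1) + (m + 1) : ℕ) = 2 * (m + 1) := by omega
    rw [this, ZMod.natCast_self]
  push_cast at this
  convert this using 2 <;> push_cast <;> ring

lemma mem_cent (x : Multiplicative (ZMod j) × S) :
    x ∈ Subgroup.centralizer (↑(Subgroup.zpowers (gg m j)) :
      Set (Multiplicative (ZMod j) × S)) ↔ (x.2.left)⁻¹ = x.2.left := by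
  have hcomm : (gg m j) * x = x * (gg m j) ↔ (x.2.left)⁻¹ = x.2.left := by
    constructor
    · intro h
      have := congrArg (fun y => (y.2).left) h
      simpa [gg, invHom_one, mul_comm] using this
    · intro h
      refine Prod.ext (by simp [gg]) ?_
      refine SemidirectProduct.ext ?_ ?_
      · simp [gg, invHom_one, h]
      · simp [gg, mul_comm]
  rw [Subgroup.mem_centralizer_iff]
  constructor
  · intro h
    exact hcomm.mp (h _ (Subgroup.mem_zpowers _))
  · intro h y hy
    obtain ⟨n, rfl⟩ := hy
    exact Commute.zpow_left (hcomm.mpr h) n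
end Aux

section Aux2
open scoped Classical

variable (m j : ℕ)

local notation "S'" => (Multiplicative (ZMod (2 * (m + 1))) ⋊[invHom (2 * (m + 1))]
          Multiplicative (ZMod 2))

noncomputable def MM : Multiplicative (ZMod (2 * (m + 1))) :=
  Multiplicative.ofAdd ((m + 1 : ℕ) : ZMod (2 * (m + 1)))

lemma MM_inv : (MM m)⁻¹ = MM m := by
  have := Msq m
  simp only [MM, ← ofAdd_neg]
  congr 1
  exact neg_eq_of_add_eq_zero_left this

noncomputable def centEquiv :
    (Subgroup.centralizer (↑(Subgroup.zpowers (gg m j)) :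
        Set (Multiplicative (ZMod j) × S')) : Subgroup _) ≃
      Multiplicative (ZMod j) × Bool × Multiplicative (ZMod 2) where
  toFun z := (z.1.1, decide (z.1.2.left = MM m), z.1.2.right)
  invFun p := ⟨(p.1, ⟨if p.2.1 then MM m else 1, p.2.2⟩), by
    rw [mem_cent]
    rcases p.2.1 with _ | _
    · simp
    · simp [MM_inv]⟩
  left_inv z := by
    obtain ⟨⟨z1, z2⟩, hz⟩ := z
    rw [mem_cent] at hz
    have h2 : Multiplicative.toAdd z2.left + Multiplicative.toAdd z2.left = 0 := by
      have h3 : (Multiplicative.toAdd (z2.left⁻¹)) = Multiplicative.toAdd z2.left :=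
        congrArg (fun w => Multiplicative.toAdd w) hz
      rw [toAdd_inv] at h3
      nth_rewrite 1 [← h3]
      exact neg_add_cancel _
    rcases solutions m _ h2 with h | h
    · have hzl : z2.left = 1 := by
        have := congrArg Multiplicative.ofAdd h
        simpa using this
      have hne : z2.left ≠ MM m := by
        rw [hzl, MM]
        intro hc
        exact Mne m (by simpa using congrArg Multiplicative.toAdd hc.symm)
      have hb : (decide (z2.left = MM m)) = false := by simp [hne]
      ext <;> simp [hb, hzl]
      exact fun hc => hc.symm
    · have hzl : z2.left = MM m := by
        have := congrArg Multiplicative.ofAdd h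
        simpa [MM] using this
      ext <;> simp [hzl]
  right_inv p := by
    obtain ⟨p1, b, p3⟩ := p
    rcases b with _ | _
    · have hne : (1 : Multiplicative (ZMod (2 * (m + 1)))) ≠ MM m := by
        rw [MM]
        intro hc
        exact Mne m (by simpa using congrArg Multiplicative.toAdd hc.symm)
      have hb : (decide ((1 : Multiplicative (ZMod (2 * (m + 1)))) = MM m)) = false := by
        simp [hne]
      simp [hb]
    · simp

end Aux2

abbrev Gp (m j : ℕ) := Multiplicative (ZMod j) ×
  (Multiplicative (ZMod (2 * (m + 1))) ⋊[invHom (2 * (m + 1))] Multiplicative (ZMod 2))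

section Aux3
variable (m j : ℕ)

local notation "S'" => (Multiplicative (ZMod (2 * (m + 1))) ⋊[invHom (2 * (m + 1))]
          Multiplicative (ZMod 2))

noncomputable def sdEquiv : S' ≃ Multiplicative (ZMod (2 * (m + 1))) × Multiplicative (ZMod 2) where
  toFun x := (x.left, x.right)
  invFun p := ⟨p.1, p.2⟩
  left_inv x := by cases x; rfl
  right_inv p := rfl

lemma card_mult (n : ℕ) : Nat.card (Multiplicative (ZMod n)) = n := by
  rw [Nat.card_congr Multiplicative.toAdd, Nat.card_zmod]

lemma card_G : Nat.card (Multiplicative (ZMod j) × S') = j * (2 * (m + 1) * 2) := by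
  rw [Nat.card_prod, Nat.card_congr (sdEquiv m), Nat.card_prod, card_mult, card_mult, card_mult]

lemma card_cent :
    Nat.card (Subgroup.centralizer (↑(Subgroup.zpowers (gg m j)) :
      Set (Multiplicative (ZMod j) × S'))) = j * (2 * 2) := by
  rw [Nat.card_congr (centEquiv m j), Nat.card_prod, Nat.card_prod, card_mult, card_mult,
    Nat.card_eq_fintype_card, Fintype.card_bool]

lemma card_H : Nat.card (Subgroup.zpowers (gg m j)) = 2 := by
  rw [Nat.card_zpowers, gg, Prod.orderOf]
  have h1 : orderOf (SemidirectProduct.inr (φ := invHom (2 * (m + 1)))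
      (Multiplicative.ofAdd (1 : ZMod 2))) = 2 := by
    rw [orderOf_injective SemidirectProduct.inr SemidirectProduct.inr_injective,
      orderOf_ofAdd_eq_addOrderOf, ZMod.addOrderOf_one]
  simp [h1]

end Aux3

/-- For positive integers `r, q` with `2q = m·r`, `m` odd and `r = 2j`, the group
`G = ℤ_j × (ℤ_{2(m+1)} ⋊ ℤ₂)` (inversion action) with `H` the copy of `ℤ₂` in the
semidirect factor satisfies `|H| = 2`, `[Z_G(H) : H] = r`, `[G : H] = r + 2q`. -/
theorem exists_group_case_m_odd (r q m j : ℕ) (hr : 0 < r) (hq : 0 < q)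
    (hm : 2 * q = m * r) (hmo : Odd m) (hj : r = 2 * j) :
    ∀ H : Subgroup (Multiplicative (ZMod j) ×
        (Multiplicative (ZMod (2 * (m + 1))) ⋊[invHom (2 * (m + 1))]
          Multiplicative (ZMod 2))),
      H = Subgroup.zpowers
          ((1, SemidirectProduct.inr (Multiplicative.ofAdd (1 : ZMod 2)))) →
      Nat.card H = 2 ∧
      H.relIndex (Subgroup.centralizer (H : Set _)) = r ∧
      H.index = r + 2 * q := by
  intro H hH
  subst hH
  have hg : ((1 : Multiplicative (ZMod j)),
      SemidirectProduct.inr (φ := invHom (2 * (m + 1)))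
        (Multiplicative.ofAdd (1 : ZMod 2))) = gg m j := rfl
  rw [hg]
  have hj0 : 0 < j := by omega
  have hq' : q = m * j := by
    have : 2 * q = 2 * (m * j) := by rw [hm, hj]; ring
    omega
  have hcH := card_H m j
  have h3 := Subgroup.card_mul_index (Subgroup.zpowers (gg m j))
  rw [hcH, card_G] at h3
  have hIH : (Subgroup.zpowers (gg m j)).index = j * ((m + 1) * 2) := by
    apply Nat.eq_of_mul_eq_mul_left (show 0 < 2 by norm_num)
    rw [h3]; ring
  refine ⟨hcH, ?_, ?_⟩
  · have hle : Subgroup.zpowers (gg m j) ≤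
        Subgroup.centralizer ((Subgroup.zpowers (gg m j) :
          Subgroup (Multiplicative (ZMod j) ×
            (Multiplicative (ZMod (2 * (m + 1))) ⋊[invHom (2 * (m + 1))]
              Multiplicative (ZMod 2)))) : Set _) := by
      intro x hx
      obtain ⟨n, rfl⟩ := hx
      rw [Subgroup.mem_centralizer_iff]
      rintro y ⟨k, rfl⟩
      exact (Commute.refl (gg m j)).zpow_zpow k n
    have h1 := Subgroup.relIndex_mul_index hle
    have h2 := Subgroup.card_mul_index
      (Subgroup.centralizer (↑(Subgroup.zpowers (gg m j)) : Set (Gp m j)))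
    rw [card_cent, card_G] at h2
    have hIZ : (Subgroup.centralizer
        (↑(Subgroup.zpowers (gg m j)) : Set (Gp m j))).index = m + 1 := by
      apply Nat.eq_of_mul_eq_mul_left (show 0 < j * (2 * 2) by omega)
      rw [h2]; ring
    rw [hIZ, hIH] at h1
    have hr2 : (Subgroup.zpowers (gg m j)).relIndex
        (Subgroup.centralizer ↑(Subgroup.zpowers (gg m j))) = j * 2 := by
      apply Nat.eq_of_mul_eq_mul_right (show 0 < m + 1 by omega)
      rw [h1]; ring
    rw [hr2]
    omega
  · rw [hIH]
    have : j * ((m + 1) * 2) = 2 * j + 2 * (m * j) := by ring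
    omega
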